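/- Any minimizer W* of −φ^tot(W) among connected configurations contains at most K−3 non-zero weights in layers 2 through K−2 (i.e., between layers V_2 and V_{K-1}), when K > 3. -/
import Mathlib


open Finset

/-- Contiguity of an edge sequence: consecutive edges share endpoints. -/
def Contig (K : ℕ) (γ : Fin (K-1) → ℕ × ℕ) : Prop :=
  ∀ k : Fin (K-1), ∀ h : k.val + 1 < K - 1, (γ k).2 = (γ ⟨k.val + 1, h⟩).1

instance (K : ℕ) (γ : Fin (K-1) → ℕ × ℕ) : Decidable (Contig K γ) := by
  unfold Contig; infer_instance

/-- Total connectivity: sum over all contiguous input-to-output edge sequences of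
the product of edge weights. -/
noncomputable def phiTot (K : ℕ) (E : ℕ → Finset (ℕ × ℕ)) (θ : ℕ → ℕ → ℕ → ℝ) : ℝ :=
  ∑ γ ∈ (Fintype.piFinset (fun k : Fin (K-1) => E k.val)).filter (fun γ => Contig K γ),
    ∏ k : Fin (K-1), θ k.val (γ k).1 (γ k).2

/-- Total absolute weight of layer k. -/
noncomputable def Snorm (E : ℕ → Finset (ℕ × ℕ)) (W : ℕ → ℕ → ℕ → ℝ) (k : ℕ) : ℝ :=
  ∑ e ∈ E k, |W k e.1 e.2|

/-- Per-layer normalized weights. -/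
noncomputable def thetaNorm (E : ℕ → Finset (ℕ × ℕ)) (W : ℕ → ℕ → ℕ → ℝ)
    (k i j : ℕ) : ℝ :=
  |W k i j| / Snorm E W k

/-- Connectivity from the input layer to node `r` in layer `l`. -/
noncomputable def aIn (E : ℕ → Finset (ℕ × ℕ)) (θ : ℕ → ℕ → ℕ → ℝ) (l r : ℕ) : ℝ :=
  ∑ γ ∈ (Fintype.piFinset (fun k : Fin l => E k.val)).filter
      (fun γ => (∀ k : Fin l, ∀ h : k.val + 1 < l, (γ k).2 = (γ ⟨k.val + 1, h⟩).1)
        ∧ ∀ h : 0 < l, (γ ⟨l - 1, by omega⟩).2 = r),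
    ∏ k : Fin l, θ k.val (γ k).1 (γ k).2

/-- Connectivity from node `r` in layer `l` to the output layer (layer K-1). -/
noncomputable def aOut (K : ℕ) (E : ℕ → Finset (ℕ × ℕ)) (θ : ℕ → ℕ → ℕ → ℝ)
    (l r : ℕ) : ℝ :=
  ∑ γ ∈ (Fintype.piFinset (fun k : Fin (K - 1 - l) => E (l + k.val))).filter
      (fun γ => (∀ k : Fin (K - 1 - l), ∀ h : k.val + 1 < K - 1 - l,
          (γ k).2 = (γ ⟨k.val + 1, h⟩).1)
        ∧ ∀ h : 0 < K - 1 - l, (γ ⟨0, h⟩).1 = r),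
    ∏ k : Fin (K - 1 - l), θ (l + k.val) (γ k).1 (γ k).2

/-- any connected minimizer of −φ^tot (i.e. φ^tot = 1) has at most
K − 3 non-zero weights between layers 2 and K−1 (K > 3, fully connected). -/
theorem minimizer_middle_sparsity
    (K : ℕ) (hK : 3 < K) (n : ℕ → ℕ) (E : ℕ → Finset (ℕ × ℕ))
    (W : ℕ → ℕ → ℕ → ℝ)
    (hE : ∀ k, k < K - 1 → E k = (Finset.range (n k)) ×ˢ (Finset.range (n (k+1))))
    (hS : ∀ k, k < K - 1 → 0 < Snorm E W k)
    (hmax : phiTot K E (thetaNorm E W) = 1) :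
    ∑ k ∈ Finset.Ico 1 (K - 2), ((E k).filter (fun e => W k e.1 e.2 ≠ 0)).card
      ≤ K - 3 := by
  classical
  set θ := thetaNorm E W with hθdef
  have hθnn : ∀ k i j, 0 ≤ θ k i j := by
    intro k i j
    exact div_nonneg (abs_nonneg _) (Finset.sum_nonneg fun e _ => abs_nonneg _)
  have hsum : ∀ k, k < K - 1 → ∑ e ∈ E k, θ k e.1 e.2 = 1 := by
    intro k hk
    have h := hS k hk
    simp only [hθdef, thetaNorm, ← Finset.sum_div]
    rw [show (∑ e ∈ E k, |W k e.1 e.2|) = Snorm E W k from rfl]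
    exact div_self (ne_of_gt h)
  have htotal : ∑ γ ∈ Fintype.piFinset (fun k : Fin (K-1) => E k.val),
      ∏ k : Fin (K-1), θ k.val (γ k).1 (γ k).2 = 1 := by
    have hps := Finset.prod_univ_sum (fun k : Fin (K-1) => E k.val)
      (fun k e => θ k.val e.1 e.2)
    rw [← hps, Finset.prod_eq_one]
    intro k _
    exact hsum k.val k.isLt
  have hsplit := Finset.sum_filter_add_sum_filter_not
    (Fintype.piFinset (fun k : Fin (K-1) => E k.val)) (fun γ => Contig K γ)
    (fun γ => ∏ k : Fin (K-1), θ k.val (γ k).1 (γ k).2)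
  have hrest : ∑ γ ∈ (Fintype.piFinset (fun k : Fin (K-1) => E k.val)).filter
      (fun γ => ¬ Contig K γ), ∏ k : Fin (K-1), θ k.val (γ k).1 (γ k).2 = 0 := by
    have hphi : phiTot K E θ = 1 := hmax
    rw [phiTot] at hphi
    rw [hphi, htotal] at hsplit
    linarith
  have hzero : ∀ γ ∈ (Fintype.piFinset (fun k : Fin (K-1) => E k.val)),
      ¬ Contig K γ → ∏ k : Fin (K-1), θ k.val (γ k).1 (γ k).2 = 0 := by
    intro γ hγ hnc
    have hnn : ∀ γ' ∈ (Fintype.piFinset (fun k : Fin (K-1) => E k.val)).filter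
        (fun γ => ¬ Contig K γ), 0 ≤ ∏ k : Fin (K-1), θ k.val (γ' k).1 (γ' k).2 :=
      fun γ' _ => Finset.prod_nonneg fun k _ => hθnn _ _ _
    exact (Finset.sum_eq_zero_iff_of_nonneg hnn).mp hrest γ
      (Finset.mem_filter.mpr ⟨hγ, hnc⟩)
  have hkey : ∀ γ ∈ (Fintype.piFinset (fun k : Fin (K-1) => E k.val)),
      (∀ k : Fin (K-1), 0 < θ k.val (γ k).1 (γ k).2) → Contig K γ := by
    intro γ hγ hpos
    by_contra hnc
    have h0 := hzero γ hγ hnc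
    have hp : 0 < ∏ k : Fin (K-1), θ k.val (γ k).1 (γ k).2 :=
      Finset.prod_pos fun k _ => hpos k
    linarith
  have hex : ∀ j : Fin (K-1), ∃ e ∈ E j.val, 0 < θ j.val e.1 e.2 := by
    intro j
    by_contra hcon
    push_neg at hcon
    have hz : ∑ e ∈ E j.val, θ j.val e.1 e.2 = 0 :=
      Finset.sum_eq_zero fun e he => le_antisymm (hcon e he) (hθnn _ _ _)
    rw [hsum j.val j.isLt] at hz
    norm_num at hz
  choose c hcmem hcpos using hex
  have hcross : ∀ (k : ℕ) (hk : k + 1 < K - 1),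
      ∀ e ∈ E k, 0 < θ k e.1 e.2 → ∀ f ∈ E (k+1), 0 < θ (k+1) f.1 f.2 →
      e.2 = f.1 := by
    intro k hk e he hepos f hf hfpos
    set γ : Fin (K-1) → ℕ × ℕ := fun j =>
      if j.val = k then e else if j.val = k + 1 then f else c j with hγdef
    have hγmem : γ ∈ Fintype.piFinset (fun k : Fin (K-1) => E k.val) := by
      rw [Fintype.mem_piFinset]
      intro j
      by_cases h1 : j.val = k
      · have hje : γ j = e := if_pos h1
        rw [hje, h1]; exact he
      · by_cases h2 : j.val = k + 1
        · have hjf : γ j = f := (if_neg h1).trans (if_pos h2)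
          rw [hjf, h2]; exact hf
        · have hjc : γ j = c j := (if_neg h1).trans (if_neg h2)
          rw [hjc]; exact hcmem j
    have hγpos : ∀ j : Fin (K-1), 0 < θ j.val (γ j).1 (γ j).2 := by
      intro j
      by_cases h1 : j.val = k
      · have hje : γ j = e := if_pos h1
        rw [hje, h1]; exact hepos
      · by_cases h2 : j.val = k + 1
        · have hjf : γ j = f := (if_neg h1).trans (if_pos h2)
          rw [hjf, h2]; exact hfpos
        · have hjc : γ j = c j := (if_neg h1).trans (if_neg h2)
          rw [hjc]; exact hcpos j
    have hcont := hkey γ hγmem hγpos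
    have h1 : (γ ⟨k, by omega⟩).2 = (γ ⟨k + 1, hk⟩).1 := hcont ⟨k, by omega⟩ hk
    have hγk : γ (⟨k, by omega⟩ : Fin (K-1)) = e := if_pos rfl
    have hγk1 : γ (⟨k + 1, hk⟩ : Fin (K-1)) = f :=
      (if_neg (by simp)).trans (if_pos rfl)
    rw [hγk, hγk1] at h1
    exact h1
  have hWθ : ∀ k, k < K - 1 → ∀ i j : ℕ, W k i j ≠ 0 ↔ 0 < θ k i j := by
    intro k hk i j
    constructor
    · intro hW
      exact div_pos (abs_pos.mpr hW) (hS k hk)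
    · intro hθ hW0
      rw [hθdef, thetaNorm, hW0, abs_zero, zero_div] at hθ
      exact lt_irrefl _ hθ
  have hcard : ∀ k ∈ Finset.Ico 1 (K - 2),
      ((E k).filter (fun e => W k e.1 e.2 ≠ 0)).card ≤ 1 := by
    intro k hk
    rw [Finset.mem_Ico] at hk
    obtain ⟨hk1, hk2⟩ := hk
    apply Finset.card_le_one.mpr
    intro a ha b hb
    rw [Finset.mem_filter] at ha hb
    have hkK : k < K - 1 := by omega
    have hapos : 0 < θ k a.1 a.2 := (hWθ k hkK a.1 a.2).mp ha.2
    have hbpos : 0 < θ k b.1 b.2 := (hWθ k hkK b.1 b.2).mp hb.2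
    have hkm : k - 1 < K - 1 := by omega
    set jm : Fin (K-1) := ⟨k - 1, hkm⟩ with hjm
    have hleft : (k - 1) + 1 < K - 1 := by omega
    have hstep : (k - 1) + 1 = k := by omega
    have hcm := hcross (k - 1) hleft (c jm) (hcmem jm) (hcpos jm)
    rw [hstep] at hcm
    have ha1 : (c jm).2 = a.1 := hcm a ha.1 hapos
    have hb1 : (c jm).2 = b.1 := hcm b hb.1 hbpos
    have hkp : k + 1 < K - 1 := by omega
    set jp : Fin (K-1) := ⟨k + 1, hkp⟩ with hjp
    have ha2 : a.2 = (c jp).1 :=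
      hcross k hkp a ha.1 hapos (c jp) (hcmem jp) (hcpos jp)
    have hb2 : b.2 = (c jp).1 :=
      hcross k hkp b hb.1 hbpos (c jp) (hcmem jp) (hcpos jp)
    apply Prod.ext <;> omega
  calc ∑ k ∈ Finset.Ico 1 (K - 2), ((E k).filter (fun e => W k e.1 e.2 ≠ 0)).card
      ≤ ∑ k ∈ Finset.Ico 1 (K - 2), 1 := Finset.sum_le_sum hcard
    _ = K - 3 := by
        rw [Finset.sum_const, smul_eq_mul, mul_one, Nat.card_Ico]
        omega
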